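/- Let φ be a nondegenerate Bernstein function of class B_N, with data (m, σ², Π̄). (i) If σ² > 0 or Π̄(0⁺) = ∞, then lim_{u→∞} u² φ'(u)/φ(u) = ∞. (ii) If σ² = 0 and Π̄(0⁺) < ∞, then lim_{u→∞} u² φ'(u)/φ(u) = Π̄(0⁺) / (m + ∫₀^∞ Π̄(y) dy). (Paper: Proposition 'propBernsteinlog'.) -/

import Mathlib

open MeasureTheory Set Filter Real
open scoped Topology

lemma BF_texp (t : ℝ) (ht : 0 ≤ t) : t * Real.exp (-t) ≤ 1 := by
  have h := Real.add_one_le_exp t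
  calc t * Real.exp (-t) ≤ Real.exp t * Real.exp (-t) :=
        mul_le_mul_of_nonneg_right (by linarith) (Real.exp_nonneg _)
    _ = 1 := by rw [← Real.exp_add]; simp

lemma BF_exp_int {u : ℝ} (hu : 0 < u) {a : ℝ} (ha : 0 ≤ a) :
    IntegrableOn (fun y => y * Real.exp (-(u*y))) (Set.Ioi a) := by
  have h2 : IntegrableOn (fun y : ℝ => (2/u) * Real.exp (-(u/2) * y)) (Set.Ioi a) :=
    ((exp_neg_integrableOn_Ioi a (by linarith : (0:ℝ) < u/2)).const_mul _)
  refine Integrable.mono' h2 ?_ ?_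
  · exact (continuous_id.mul (by continuity)).aestronglyMeasurable
  · filter_upwards [ae_restrict_mem measurableSet_Ioi] with y (hy : a < y)
    have hy0 : 0 < y := lt_of_le_of_lt ha hy
    rw [Real.norm_eq_abs, abs_of_nonneg (by positivity)]
    have : y * Real.exp (-(u*y)) = (2/u) * ((u/2 * y) * Real.exp (-(u/2 * y))) * Real.exp (-(u/2 * y)) := by
      rw [show -(u*y) = -(u/2*y) + -(u/2*y) by ring, Real.exp_add]; field_simp
    rw [this]
    have h1 : (u/2 * y) * Real.exp (-(u/2 * y)) ≤ 1 := BF_texp _ (by positivity)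
    calc (2/u) * ((u/2 * y) * Real.exp (-(u/2 * y))) * Real.exp (-(u/2 * y))
        ≤ (2/u) * 1 * Real.exp (-(u/2 * y)) := by
          apply mul_le_mul_of_nonneg_right _ (Real.exp_nonneg _)
          exact mul_le_mul_of_nonneg_left h1 (by positivity)
      _ = (2/u) * Real.exp (-(u/2) * y) := by rw [mul_one]; ring_nf

lemma BF_exp_integral {u : ℝ} (hu : 0 < u) {a : ℝ} (ha : 0 ≤ a) :
    ∫ y in Set.Ioi a, y * Real.exp (-(u*y)) = (a/u + 1/u^2) * Real.exp (-(u*a)) := by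
  have key : ∀ x : ℝ, HasDerivAt (fun y => -((y/u + 1/u^2) * Real.exp (-(u*y))))
      (x * Real.exp (-(u*x))) x := by
    intro x
    have h1 : HasDerivAt (fun y : ℝ => y/u + 1/u^2) (1/u) x :=
      ((hasDerivAt_id x).div_const u).add_const (1/u^2)
    have h3 : HasDerivAt (fun y : ℝ => -(u*y)) (-u) x := by
      exact (by simpa using (hasDerivAt_id x).const_mul u : HasDerivAt (fun y : ℝ => u*y) u x).neg
    have h2 : HasDerivAt (fun y : ℝ => Real.exp (-(u*y))) (-u * Real.exp (-(u*x))) x := by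
      convert h3.exp using 1; ring
    have := (h1.mul h2).neg
    refine this.congr_deriv ?_
    field_simp
    ring
  have htend : Tendsto (fun y => -((y/u + 1/u^2) * Real.exp (-(u*y)))) atTop (𝓝 0) := by
    have h0 : Tendsto (fun t : ℝ => -((t/u^2 + 1/u^2) * Real.exp (-t))) atTop (𝓝 0) := by
      have h1 : Tendsto (fun t : ℝ => t * Real.exp (-t)) atTop (𝓝 0) := by
        simpa using Real.tendsto_pow_mul_exp_neg_atTop_nhds_zero 1
      have h2 : Tendsto (fun t : ℝ => Real.exp (-t)) atTop (𝓝 0) := by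
        simpa using Real.tendsto_exp_neg_atTop_nhds_zero
      have := ((h1.const_mul (1/u^2)).add (h2.const_mul (1/u^2))).neg
      simp only [mul_zero, add_zero, neg_zero, zero_add] at this
      convert this using 2 with t
      field_simp
    have hcomp : Tendsto (fun y : ℝ => u * y) atTop atTop :=
      Tendsto.const_mul_atTop hu tendsto_id
    have := h0.comp hcomp
    convert this using 2 with y
    simp only [Function.comp_apply]
    field_simp
  rw [integral_Ioi_of_hasDerivAt_of_tendsto
      (key a).continuousAt.continuousWithinAt (fun x _ => key x) (BF_exp_int hu ha) htend]
  ring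

lemma BF_meas {Pib : ℝ → ℝ} (hPib_int : IntegrableOn (fun y : ℝ => min 1 y * Pib y) (Set.Ioi 0)) :
    AEStronglyMeasurable Pib (volume.restrict (Set.Ioi 0)) := by
  have h1 := hPib_int.aestronglyMeasurable
  have h2 : AEStronglyMeasurable (fun y : ℝ => (min 1 y)⁻¹ * (min 1 y * Pib y))
      (volume.restrict (Set.Ioi 0)) :=
    (((measurable_const.min measurable_id).inv).aestronglyMeasurable).mul h1
  refine h2.congr ?_
  filter_upwards [ae_restrict_mem measurableSet_Ioi] with y (hy : (0:ℝ) < y)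
  have hne : min 1 y ≠ 0 := ne_of_gt (lt_min one_pos hy)
  field_simp

lemma BF_int_aux {Pib : ℝ → ℝ} (hnn : ∀ y : ℝ, 0 < y → 0 ≤ Pib y)
    (hPib_int : IntegrableOn (fun y : ℝ => min 1 y * Pib y) (Set.Ioi 0))
    {g : ℝ → ℝ} (hg : AEStronglyMeasurable g (volume.restrict (Set.Ioi 0)))
    {K : ℝ} (hK : ∀ y : ℝ, 0 < y → |g y| ≤ K * min 1 y) :
    IntegrableOn (fun y => g y * Pib y) (Set.Ioi 0) := by
  refine Integrable.mono' (hPib_int.const_mul K) (hg.mul (BF_meas hPib_int)) ?_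
  filter_upwards [ae_restrict_mem measurableSet_Ioi] with y (hy : (0:ℝ) < y)
  rw [Real.norm_eq_abs, abs_mul, abs_of_nonneg (hnn y hy)]
  calc |g y| * Pib y ≤ (K * min 1 y) * Pib y :=
        mul_le_mul_of_nonneg_right (hK y hy) (hnn y hy)
    _ = K * (min 1 y * Pib y) := by ring

lemma BF_bound1 {u : ℝ} (hu : 0 < u) (y : ℝ) (hy : 0 < y) :
    |y * Real.exp (-(u*y))| ≤ max 1 u⁻¹ * min 1 y := by
  rw [abs_of_nonneg (by positivity)]
  rcases le_or_gt y 1 with h1 | h1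
  · have : min 1 y = y := min_eq_right h1
    rw [this]
    have he : Real.exp (-(u*y)) ≤ 1 := Real.exp_le_one_iff.2 (by nlinarith)
    calc y * Real.exp (-(u*y)) ≤ y * 1 := mul_le_mul_of_nonneg_left he hy.le
      _ = 1 * y := by ring
      _ ≤ max 1 u⁻¹ * y := mul_le_mul_of_nonneg_right (le_max_left _ _) hy.le
  · have : min 1 y = 1 := min_eq_left h1.le
    rw [this, mul_one]
    have key : y * Real.exp (-(u*y)) = u⁻¹ * ((u*y) * Real.exp (-(u*y))) := by
      field_simp
    rw [key]
    calc u⁻¹ * ((u*y) * Real.exp (-(u*y))) ≤ u⁻¹ * 1 :=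
          mul_le_mul_of_nonneg_left (BF_texp _ (by positivity)) (by positivity)
      _ ≤ max 1 u⁻¹ := by rw [mul_one]; exact le_max_right _ _

lemma BF_bound2 {u : ℝ} (hu : 0 ≤ u) (y : ℝ) (hy : 0 < y) :
    |1 - Real.exp (-(u*y))| ≤ max 1 u * min 1 y := by
  have he1 : Real.exp (-(u*y)) ≤ 1 := Real.exp_le_one_iff.2 (by nlinarith)
  have he2 : 1 - (u*y) ≤ Real.exp (-(u*y)) := by
    have := Real.add_one_le_exp (-(u*y)); linarith
  rw [abs_of_nonneg (by linarith)]
  rcases le_or_gt y 1 with h1 | h1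
  · have : min 1 y = y := min_eq_right h1
    rw [this]
    calc 1 - Real.exp (-(u*y)) ≤ u * y := by linarith
      _ ≤ max 1 u * y := mul_le_mul_of_nonneg_right (le_max_right _ _) hy.le
  · have : min 1 y = 1 := min_eq_left h1.le
    rw [this, mul_one]
    have : (1:ℝ) ≤ max 1 u := le_max_left _ _
    linarith [Real.exp_nonneg (-(u*y))]

lemma BF_int1 {Pib : ℝ → ℝ} (hnn : ∀ y : ℝ, 0 < y → 0 ≤ Pib y)
    (hPib_int : IntegrableOn (fun y : ℝ => min 1 y * Pib y) (Set.Ioi 0))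
    {u : ℝ} (hu : 0 < u) :
    IntegrableOn (fun y => y * Real.exp (-(u*y)) * Pib y) (Set.Ioi 0) :=
  BF_int_aux hnn hPib_int
    ((continuous_id.mul (by continuity)).aestronglyMeasurable)
    (BF_bound1 hu)

lemma BF_int2 {Pib : ℝ → ℝ} (hnn : ∀ y : ℝ, 0 < y → 0 ≤ Pib y)
    (hPib_int : IntegrableOn (fun y : ℝ => min 1 y * Pib y) (Set.Ioi 0))
    {u : ℝ} (hu : 0 ≤ u) :
    IntegrableOn (fun y => (1 - Real.exp (-(u*y))) * Pib y) (Set.Ioi 0) :=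
  BF_int_aux hnn hPib_int
    ((continuous_const.sub (by continuity)).aestronglyMeasurable)
    (BF_bound2 hu)

lemma BF_hasDeriv {φ Pib : ℝ → ℝ} {m σ2 : ℝ}
    (hnn : ∀ y : ℝ, 0 < y → 0 ≤ Pib y)
    (hPib_int : IntegrableOn (fun y : ℝ => min 1 y * Pib y) (Set.Ioi 0))
    (hrep : ∀ u : ℝ, 0 < u →
      φ u = m + σ2 * u + ∫ y in Set.Ioi (0:ℝ), (1 - Real.exp (-(u * y))) * Pib y)
    {u : ℝ} (hu : 0 < u) :
    HasDerivAt φ (σ2 + ∫ y in Set.Ioi (0:ℝ), y * Real.exp (-(u*y)) * Pib y) u := by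
  have hPm := BF_meas hPib_int
  have main : HasDerivAt (fun v : ℝ => ∫ y in Set.Ioi (0:ℝ), (1 - Real.exp (-(v*y))) * Pib y)
      (∫ y in Set.Ioi (0:ℝ), y * Real.exp (-(u*y)) * Pib y) u := by
    have h := hasDerivAt_integral_of_dominated_loc_of_deriv_le
      (μ := volume.restrict (Set.Ioi 0))
      (F := fun v (y : ℝ) => (1 - Real.exp (-(v*y))) * Pib y)
      (F' := fun v (y : ℝ) => y * Real.exp (-(v*y)) * Pib y)
      (x₀ := u) (s := Metric.ball u (u/2))
      (bound := fun y : ℝ => max 1 (u/2)⁻¹ * (min 1 y * Pib y))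
      (Metric.ball_mem_nhds u (by positivity))
      (Filter.Eventually.of_forall fun x =>
        ((continuous_const.sub (by continuity)).aestronglyMeasurable).mul hPm)
      (BF_int2 hnn hPib_int hu.le)
      (((continuous_id.mul (by continuity)).aestronglyMeasurable).mul hPm)
      ?_ (hPib_int.const_mul _) ?_
    · exact h.2
    · filter_upwards [ae_restrict_mem measurableSet_Ioi] with y (hy : (0:ℝ) < y)
      intro x hx
      rw [Metric.mem_ball, Real.dist_eq, abs_lt] at hx
      have hx2 : u/2 < x := by linarith [hx.1]
      rw [Real.norm_eq_abs, abs_mul, abs_mul, abs_of_nonneg (hnn y hy),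
        abs_of_nonneg hy.le, abs_of_nonneg (Real.exp_nonneg _)]
      have hmono : Real.exp (-(x*y)) ≤ Real.exp (-(u/2*y)) :=
        Real.exp_le_exp.2 (by nlinarith)
      have hb := BF_bound1 (by positivity : (0:ℝ) < u/2) y hy
      rw [abs_of_nonneg (by positivity)] at hb
      calc y * Real.exp (-(x*y)) * Pib y ≤ y * Real.exp (-(u/2*y)) * Pib y := by
            apply mul_le_mul_of_nonneg_right _ (hnn y hy)
            exact mul_le_mul_of_nonneg_left hmono hy.le
        _ ≤ (max 1 (u/2)⁻¹ * min 1 y) * Pib y :=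
            mul_le_mul_of_nonneg_right hb (hnn y hy)
        _ = max 1 (u/2)⁻¹ * (min 1 y * Pib y) := by ring
    · filter_upwards [] with y
      intro x _
      have h3 : HasDerivAt (fun v : ℝ => -(v*y)) (-y) x := by
        exact (by simpa using (hasDerivAt_id x).mul_const y : HasDerivAt (fun v : ℝ => v*y) y x).neg
      have h4 := (h3.exp.const_sub 1).mul_const (Pib y)
      refine h4.congr_deriv ?_
      ring
  have hmain2 : HasDerivAt (fun v : ℝ => m + σ2 * v +
      ∫ y in Set.Ioi (0:ℝ), (1 - Real.exp (-(v*y))) * Pib y)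
      (σ2 + ∫ y in Set.Ioi (0:ℝ), y * Real.exp (-(u*y)) * Pib y) u := by
    have h5 : HasDerivAt (fun v : ℝ => m + σ2 * v) σ2 u := by
      simpa using ((hasDerivAt_id u).const_mul σ2).const_add m
    exact h5.add main
  refine hmain2.congr_of_eventuallyEq ?_
  filter_upwards [Ioi_mem_nhds hu] with v hv
  exact hrep v hv

lemma BF_split {f : ℝ → ℝ} {a : ℝ} (ha : 0 < a) (hf : IntegrableOn f (Set.Ioi 0)) :
    ∫ y in Set.Ioi (0:ℝ), f y = (∫ y in Set.Ioc 0 a, f y) + ∫ y in Set.Ioi a, f y := by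
  have h1 : IntegrableOn f (Set.Ioc 0 a) := hf.mono_set Set.Ioc_subset_Ioi_self
  have h2 : IntegrableOn f (Set.Ioi a) := hf.mono_set (Set.Ioi_subset_Ioi ha.le)
  rw [← Set.Ioc_union_Ioi_eq_Ioi ha.le,
    setIntegral_union (Set.Ioc_disjoint_Ioi le_rfl) measurableSet_Ioi h1 h2]

lemma BF_meas_sub {Pib : ℝ → ℝ}
    (hPib_int : IntegrableOn (fun y : ℝ => min 1 y * Pib y) (Set.Ioi 0))
    {s : Set ℝ} (hs : MeasurableSet s) (hsub : s ⊆ Set.Ioi 0) :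
    AEStronglyMeasurable Pib (volume.restrict s) := by
  have := (BF_meas hPib_int).restrict (s := s)
  rwa [Measure.restrict_restrict hs, Set.inter_eq_left.mpr hsub] at this

lemma BF_int_Ioc {Pib : ℝ → ℝ}
    (hPib_anti : ∀ x y : ℝ, 0 < x → x ≤ y → Pib y ≤ Pib x)
    (hPib_nonneg : ∀ y : ℝ, 0 < y → 0 ≤ Pib y)
    (hPib_int : IntegrableOn (fun y : ℝ => min 1 y * Pib y) (Set.Ioi 0))
    {a b : ℝ} (ha : 0 < a) :
    IntegrableOn Pib (Set.Ioc a b) := by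
  refine Integrable.mono' (g := fun _ => Pib a)
    (integrableOn_const (ne_of_lt measure_Ioc_lt_top))
    (BF_meas_sub hPib_int measurableSet_Ioc
      (fun y hy => lt_trans ha hy.1)) ?_
  filter_upwards [ae_restrict_mem measurableSet_Ioc] with y hy
  rw [Real.norm_eq_abs, abs_of_nonneg (hPib_nonneg y (lt_trans ha hy.1))]
  exact hPib_anti a y ha hy.1.le

lemma BF_int_tail {Pib : ℝ → ℝ}
    (hPib_nonneg : ∀ y : ℝ, 0 < y → 0 ≤ Pib y)
    (hPib_int : IntegrableOn (fun y : ℝ => min 1 y * Pib y) (Set.Ioi 0))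
    {a : ℝ} (ha : 1 ≤ a) :
    IntegrableOn Pib (Set.Ioi a) := by
  have h0a : (0:ℝ) < a := lt_of_lt_of_le one_pos ha
  refine Integrable.mono' (hPib_int.mono_set (Set.Ioi_subset_Ioi h0a.le))
    (BF_meas_sub hPib_int measurableSet_Ioi (Set.Ioi_subset_Ioi h0a.le)) ?_
  filter_upwards [ae_restrict_mem measurableSet_Ioi] with y (hy : a < y)
  have hy0 : (0:ℝ) < y := lt_trans h0a hy
  have : min 1 y = 1 := min_eq_left (le_trans ha hy.le)
  rw [Real.norm_eq_abs, abs_of_nonneg (hPib_nonneg y hy0), this, one_mul]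

lemma BF_int_yPib {Pib : ℝ → ℝ}
    (hPib_nonneg : ∀ y : ℝ, 0 < y → 0 ≤ Pib y)
    (hPib_int : IntegrableOn (fun y : ℝ => min 1 y * Pib y) (Set.Ioi 0))
    {s : ℝ} (hs : s ≤ 1) :
    IntegrableOn (fun y => y * Pib y) (Set.Ioc 0 s) := by
  refine Integrable.mono' (hPib_int.mono_set Set.Ioc_subset_Ioi_self)
    ((measurable_id.aestronglyMeasurable).mul
      (BF_meas_sub hPib_int measurableSet_Ioc (fun y hy => hy.1))) ?_
  filter_upwards [ae_restrict_mem measurableSet_Ioc] with y hy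
  have hy0 : (0:ℝ) < y := hy.1
  have hmin : min 1 y = y := min_eq_right (le_trans hy.2 hs)
  rw [Real.norm_eq_abs, abs_of_nonneg (mul_nonneg hy0.le (hPib_nonneg y hy0)), hmin]

lemma BF_phi_pos {φ Pib : ℝ → ℝ} {m σ2 : ℝ}
    (hm : 0 ≤ m) (hσ : 0 ≤ σ2)
    (hPib_nonneg : ∀ y : ℝ, 0 < y → 0 ≤ Pib y)
    (hPib_anti : ∀ x y : ℝ, 0 < x → x ≤ y → Pib y ≤ Pib x)
    (hPib_int : IntegrableOn (fun y : ℝ => min 1 y * Pib y) (Set.Ioi 0))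
    (hrep : ∀ u : ℝ, 0 < u →
      φ u = m + σ2 * u + ∫ y in Set.Ioi (0:ℝ), (1 - Real.exp (-(u * y))) * Pib y)
    (hnd : ¬ (m = 0 ∧ σ2 = 0 ∧ ∀ y : ℝ, 0 < y → Pib y = 0))
    {u : ℝ} (hu : 0 < u) : 0 < φ u := by
  have hint := BF_int2 hPib_nonneg hPib_int hu.le
  have hI_nonneg : 0 ≤ ∫ y in Set.Ioi (0:ℝ), (1 - Real.exp (-(u * y))) * Pib y := by
    refine setIntegral_nonneg measurableSet_Ioi fun y hy => ?_
    have : Real.exp (-(u*y)) ≤ 1 := Real.exp_le_one_iff.2 (by nlinarith [hy.out])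
    exact mul_nonneg (by linarith) (hPib_nonneg y hy)
  rw [hrep u hu]
  rcases lt_or_eq_of_le hm with hm' | hm'
  · have : 0 ≤ σ2 * u := mul_nonneg hσ hu.le
    linarith
  rcases lt_or_eq_of_le hσ with hσ' | hσ'
  · nlinarith
  -- m = 0, σ2 = 0, so some Pib y₀ > 0
  push_neg at hnd
  obtain ⟨y₀, hy₀, hPy₀⟩ := hnd hm'.symm hσ'.symm
  have hPy₀' : 0 < Pib y₀ := lt_of_le_of_ne (hPib_nonneg y₀ hy₀) (Ne.symm hPy₀)
  set c₀ : ℝ := (1 - Real.exp (-(u * (y₀/2)))) * Pib y₀ with hc₀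
  have hexplt : Real.exp (-(u * (y₀/2))) < 1 := by
    rw [Real.exp_lt_one_iff]
    nlinarith
  have hc₀pos : 0 < c₀ := mul_pos (by linarith) hPy₀'
  have hlow : c₀ * (volume (Set.Ioc (y₀/2) y₀)).toReal ≤
      ∫ y in Set.Ioc (y₀/2) y₀, (1 - Real.exp (-(u * y))) * Pib y := by
    refine setIntegral_ge_of_const_le_real measurableSet_Ioc
      (ne_of_lt measure_Ioc_lt_top) (fun y hy => ?_)
      (hint.mono_set (fun y hy => lt_trans (by linarith) hy.1))
    have hy0 : (0:ℝ) < y := lt_trans (by linarith) hy.1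
    have h1 : Real.exp (-(u * y)) ≤ Real.exp (-(u * (y₀/2))) :=
      Real.exp_le_exp.2 (by nlinarith [hy.1])
    have h2 : Pib y₀ ≤ Pib y := hPib_anti y y₀ hy0 hy.2
    rw [hc₀]
    exact mul_le_mul (by linarith) h2 (hPib_nonneg _ hy₀) (by linarith)
  have hmono : ∫ y in Set.Ioc (y₀/2) y₀, (1 - Real.exp (-(u * y))) * Pib y ≤
      ∫ y in Set.Ioi (0:ℝ), (1 - Real.exp (-(u * y))) * Pib y := by
    refine setIntegral_mono_set hint ?_ ?_
    · filter_upwards [ae_restrict_mem measurableSet_Ioi] with y (hy : (0:ℝ) < y)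
      have : Real.exp (-(u*y)) ≤ 1 := Real.exp_le_one_iff.2 (by nlinarith)
      exact mul_nonneg (by linarith) (hPib_nonneg y hy)
    · exact HasSubset.Subset.eventuallyLE (fun y hy => lt_trans (by linarith) hy.1)
  have hvol : (volume (Set.Ioc (y₀/2) y₀)).toReal = y₀/2 := by
    rw [Real.volume_Ioc, ENNReal.toReal_ofReal (by linarith)]
    ring
  rw [hvol] at hlow
  have hIpos : 0 < ∫ y in Set.Ioi (0:ℝ), (1 - Real.exp (-(u * y))) * Pib y :=
    lt_of_lt_of_le (by positivity) (le_trans hlow hmono)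
  nlinarith [mul_nonneg hσ hu.le]

lemma BF_le_c {Pib : ℝ → ℝ}
    (hPib_anti : ∀ x y : ℝ, 0 < x → x ≤ y → Pib y ≤ Pib x)
    {c : ℝ} (hten : Filter.Tendsto Pib (nhdsWithin 0 (Set.Ioi 0)) (nhds c))
    {y : ℝ} (hy : 0 < y) : Pib y ≤ c := by
  refine ge_of_tendsto hten ?_
  filter_upwards [Ioc_mem_nhdsGT hy] with x hx
  exact hPib_anti x y hx.1 hx.2

lemma BF_tail_zero {δ c : ℝ} (hδ : 0 < δ) :
    Filter.Tendsto (fun u : ℝ => c * ((u*δ + 1) * Real.exp (-(u*δ)))) atTop (nhds 0) := by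
  have h0 : Filter.Tendsto (fun t : ℝ => c * ((t + 1) * Real.exp (-t))) atTop (nhds 0) := by
    have h1 : Filter.Tendsto (fun t : ℝ => t * Real.exp (-t)) atTop (nhds 0) := by
      simpa using Real.tendsto_pow_mul_exp_neg_atTop_nhds_zero 1
    have h2 : Filter.Tendsto (fun t : ℝ => Real.exp (-t)) atTop (nhds 0) := by
      simpa using Real.tendsto_exp_neg_atTop_nhds_zero
    have := ((h1.add h2).const_mul c)
    simp only [add_zero, mul_zero] at this
    convert this using 2 with t
    ring
  have hcomp : Filter.Tendsto (fun u : ℝ => u * δ) atTop atTop :=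
    Filter.Tendsto.atTop_mul_const hδ tendsto_id
  exact h0.comp hcomp

lemma BF_num_ii {Pib : ℝ → ℝ}
    (hPib_nonneg : ∀ y : ℝ, 0 < y → 0 ≤ Pib y)
    (hPib_anti : ∀ x y : ℝ, 0 < x → x ≤ y → Pib y ≤ Pib x)
    (hPib_int : IntegrableOn (fun y : ℝ => min 1 y * Pib y) (Set.Ioi 0))
    {c : ℝ} (hten : Filter.Tendsto Pib (nhdsWithin 0 (Set.Ioi 0)) (nhds c)) :
    Filter.Tendsto (fun u : ℝ => u^2 * ∫ y in Set.Ioi (0:ℝ), y * Real.exp (-(u*y)) * Pib y)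
      atTop (nhds c) := by
  have hPle : ∀ y : ℝ, 0 < y → Pib y ≤ c := fun y hy => BF_le_c hPib_anti hten hy
  have hc0 : 0 ≤ c := by
    refine ge_of_tendsto hten ?_
    filter_upwards [self_mem_nhdsWithin] with x hx using hPib_nonneg x hx
  rw [Metric.tendsto_nhds]
  intro ε hε
  -- pick δ with Pib δ > c - ε/4
  obtain ⟨δ, hδ1, hδ0⟩ : ∃ δ : ℝ, (c - ε/4 < Pib δ) ∧ δ ∈ Set.Ioi (0:ℝ) :=
    ((hten.eventually (eventually_gt_nhds (by linarith : c - ε/4 < c))).and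
      eventually_mem_nhdsWithin).exists
  have hδpos : (0:ℝ) < δ := hδ0
  filter_upwards [eventually_gt_atTop 0,
    (BF_tail_zero (c := c) hδpos).eventually (eventually_lt_nhds (by positivity : (0:ℝ) < ε/2))]
    with u hu htail
  -- integrabilities
  have I1 : IntegrableOn (fun y => y * Real.exp (-(u*y)) * Pib y) (Set.Ioi 0) :=
    BF_int1 hPib_nonneg hPib_int hu
  have Ie : IntegrableOn (fun y => y * Real.exp (-(u*y))) (Set.Ioi 0) :=
    BF_exp_int hu le_rfl
  have Ic : IntegrableOn (fun y => y * Real.exp (-(u*y)) * c) (Set.Ioi 0) := Ie.mul_const c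
  have hdiff : IntegrableOn (fun y => y * Real.exp (-(u*y)) * (c - Pib y)) (Set.Ioi 0) := by
    have := Ic.sub I1
    refine this.congr ?_
    filter_upwards [] with y
    simp only [Pi.sub_apply]
    ring
  set D : ℝ := ∫ y in Set.Ioi (0:ℝ), y * Real.exp (-(u*y)) * (c - Pib y) with hD
  have hIe_val : ∫ y in Set.Ioi (0:ℝ), y * Real.exp (-(u*y)) = 1/u^2 := by
    rw [BF_exp_integral hu le_rfl]
    norm_num
  have hIc_val : ∫ y in Set.Ioi (0:ℝ), y * Real.exp (-(u*y)) * c = c/u^2 := by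
    rw [integral_mul_const, hIe_val]
    ring
  have hDval : D = c/u^2 - ∫ y in Set.Ioi (0:ℝ), y * Real.exp (-(u*y)) * Pib y := by
    rw [hD, ← hIc_val, ← integral_sub Ic I1]
    congr 1
    funext y
    ring
  have hDnonneg : 0 ≤ D := by
    refine setIntegral_nonneg measurableSet_Ioi fun y hy => ?_
    have hy0 : (0:ℝ) < y := hy
    have h3 : 0 ≤ c - Pib y := by linarith [hPle y hy0]
    exact mul_nonneg (mul_nonneg hy0.le (Real.exp_nonneg _)) h3
  -- split D
  have hsplit := BF_split hδpos hdiff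
  have hbound1 : ∫ y in Set.Ioc (0:ℝ) δ, y * Real.exp (-(u*y)) * (c - Pib y) ≤ ε/4 * (1/u^2) := by
    have step1 : ∫ y in Set.Ioc (0:ℝ) δ, y * Real.exp (-(u*y)) * (c - Pib y) ≤
        ∫ y in Set.Ioc (0:ℝ) δ, y * Real.exp (-(u*y)) * (ε/4) := by
      refine setIntegral_mono_on (hdiff.mono_set Set.Ioc_subset_Ioi_self)
        ((Ie.mono_set Set.Ioc_subset_Ioi_self).mul_const _) measurableSet_Ioc fun y hy => ?_
      have hy0 : (0:ℝ) < y := hy.1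
      have h1 : Pib δ ≤ Pib y := hPib_anti y δ hy0 hy.2
      have h2 : c - Pib y ≤ ε/4 := by linarith
      exact mul_le_mul_of_nonneg_left h2 (by positivity)
    have step2 : ∫ y in Set.Ioc (0:ℝ) δ, y * Real.exp (-(u*y)) * (ε/4) ≤
        ∫ y in Set.Ioi (0:ℝ), y * Real.exp (-(u*y)) * (ε/4) := by
      refine setIntegral_mono_set (Ie.mul_const _) ?_
        (HasSubset.Subset.eventuallyLE Set.Ioc_subset_Ioi_self)
      filter_upwards [ae_restrict_mem measurableSet_Ioi] with y (hy : (0:ℝ) < y)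
      positivity
    have step3 : ∫ y in Set.Ioi (0:ℝ), y * Real.exp (-(u*y)) * (ε/4) = ε/4 * (1/u^2) := by
      rw [integral_mul_const, hIe_val]; ring
    linarith
  have hbound2 : ∫ y in Set.Ioi δ, y * Real.exp (-(u*y)) * (c - Pib y) ≤
      c * ((δ/u + 1/u^2) * Real.exp (-(u*δ))) := by
    have step1 : ∫ y in Set.Ioi δ, y * Real.exp (-(u*y)) * (c - Pib y) ≤
        ∫ y in Set.Ioi δ, y * Real.exp (-(u*y)) * c := by
      refine setIntegral_mono_on (hdiff.mono_set (Set.Ioi_subset_Ioi hδpos.le))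
        ((BF_exp_int hu hδpos.le).mul_const _) measurableSet_Ioi fun y hy => ?_
      have hy0 : (0:ℝ) < y := lt_trans hδpos hy
      have := hPib_nonneg y hy0
      have h2 : c - Pib y ≤ c := by linarith
      exact mul_le_mul_of_nonneg_left h2 (by positivity)
    have step2 : ∫ y in Set.Ioi δ, y * Real.exp (-(u*y)) * c =
        c * ((δ/u + 1/u^2) * Real.exp (-(u*δ))) := by
      rw [integral_mul_const, BF_exp_integral hu hδpos.le]
      ring
    linarith
  -- conclude
  have hfinal : u^2 * D ≤ ε/4 + c * ((u*δ + 1) * Real.exp (-(u*δ))) := by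
    have : D ≤ ε/4 * (1/u^2) + c * ((δ/u + 1/u^2) * Real.exp (-(u*δ))) := by
      rw [hD, hsplit]; linarith
    have h2 := mul_le_mul_of_nonneg_left this (by positivity : (0:ℝ) ≤ u^2)
    calc u^2 * D ≤ u^2 * (ε/4 * (1/u^2) + c * ((δ/u + 1/u^2) * Real.exp (-(u*δ)))) := h2
      _ = ε/4 + c * ((u*δ + 1) * Real.exp (-(u*δ))) := by
          field_simp
  rw [Real.dist_eq]
  have habs : u^2 * (∫ y in Set.Ioi (0:ℝ), y * Real.exp (-(u*y)) * Pib y) - c = -(u^2 * D) := by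
    rw [hDval]
    field_simp
    ring
  rw [habs, abs_neg, abs_of_nonneg (by positivity)]
  linarith

lemma BF_Pib_integrable {Pib : ℝ → ℝ}
    (hPib_nonneg : ∀ y : ℝ, 0 < y → 0 ≤ Pib y)
    (hPib_anti : ∀ x y : ℝ, 0 < x → x ≤ y → Pib y ≤ Pib x)
    (hPib_int : IntegrableOn (fun y : ℝ => min 1 y * Pib y) (Set.Ioi 0))
    {c : ℝ} (hten : Filter.Tendsto Pib (nhdsWithin 0 (Set.Ioi 0)) (nhds c)) :
    IntegrableOn Pib (Set.Ioi 0) := by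
  have h1 : IntegrableOn Pib (Set.Ioc 0 1) := by
    refine Integrable.mono' (g := fun _ => c)
      (integrableOn_const (ne_of_lt measure_Ioc_lt_top))
      (BF_meas_sub hPib_int measurableSet_Ioc (fun y hy => hy.1)) ?_
    filter_upwards [ae_restrict_mem measurableSet_Ioc] with y hy
    rw [Real.norm_eq_abs, abs_of_nonneg (hPib_nonneg y hy.1)]
    exact BF_le_c hPib_anti hten hy.1
  have h2 : IntegrableOn Pib (Set.Ioi 1) := BF_int_tail hPib_nonneg hPib_int le_rfl
  have := h1.union h2
  rwa [Set.Ioc_union_Ioi_eq_Ioi zero_le_one] at this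

lemma BF_den_ii {φ Pib : ℝ → ℝ} {m σ2 : ℝ}
    (hPib_nonneg : ∀ y : ℝ, 0 < y → 0 ≤ Pib y)
    (hPib_anti : ∀ x y : ℝ, 0 < x → x ≤ y → Pib y ≤ Pib x)
    (hPib_int : IntegrableOn (fun y : ℝ => min 1 y * Pib y) (Set.Ioi 0))
    (hrep : ∀ u : ℝ, 0 < u →
      φ u = m + σ2 * u + ∫ y in Set.Ioi (0:ℝ), (1 - Real.exp (-(u * y))) * Pib y)
    (hσ2 : σ2 = 0)
    {c : ℝ} (hten : Filter.Tendsto Pib (nhdsWithin 0 (Set.Ioi 0)) (nhds c)) :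
    Filter.Tendsto φ atTop (nhds (m + ∫ y in Set.Ioi (0:ℝ), Pib y)) := by
  have hPm := BF_meas hPib_int
  have hint := BF_Pib_integrable hPib_nonneg hPib_anti hPib_int hten
  have main : Filter.Tendsto
      (fun u : ℝ => ∫ y in Set.Ioi (0:ℝ), (1 - Real.exp (-(u * y))) * Pib y) atTop
      (nhds (∫ y in Set.Ioi (0:ℝ), Pib y)) := by
    refine tendsto_integral_filter_of_dominated_convergence (μ := volume.restrict (Set.Ioi 0))
      (F := fun u (y:ℝ) => (1 - Real.exp (-(u * y))) * Pib y) (f := Pib) Pib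
      (Filter.Eventually.of_forall fun u =>
        ((continuous_const.sub (by continuity)).aestronglyMeasurable).mul hPm)
      ?_ hint ?_
    · filter_upwards [eventually_ge_atTop (0:ℝ)] with u hu
      filter_upwards [ae_restrict_mem measurableSet_Ioi] with y (hy : (0:ℝ) < y)
      have he : Real.exp (-(u*y)) ≤ 1 := Real.exp_le_one_iff.2 (by nlinarith)
      rw [Real.norm_eq_abs, abs_mul, abs_of_nonneg (hPib_nonneg y hy),
        abs_of_nonneg (by linarith [Real.exp_nonneg (-(u*y))])]
      have := hPib_nonneg y hy
      nlinarith [Real.exp_nonneg (-(u*y))]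
    · filter_upwards [ae_restrict_mem measurableSet_Ioi] with y (hy : (0:ℝ) < y)
      have h1 : Filter.Tendsto (fun u : ℝ => u * y) atTop atTop :=
        Filter.Tendsto.atTop_mul_const hy tendsto_id
      have h2 : Filter.Tendsto (fun u : ℝ => Real.exp (-(u*y))) atTop (nhds 0) :=
        Real.tendsto_exp_atBot.comp (tendsto_neg_atTop_atBot.comp h1)
      have h3 := ((tendsto_const_nhds (x := (1:ℝ))).sub h2).mul_const (Pib y)
      simpa using h3
  have : Filter.Tendsto (fun u : ℝ => m + σ2 * u +
      ∫ y in Set.Ioi (0:ℝ), (1 - Real.exp (-(u * y))) * Pib y) atTop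
      (nhds (m + ∫ y in Set.Ioi (0:ℝ), Pib y)) := by
    subst hσ2
    simpa using (tendsto_const_nhds (x := m)).add main
  refine this.congr' ?_
  filter_upwards [eventually_gt_atTop (0:ℝ)] with u hu
  exact (hrep u hu).symm

lemma BF_int_id_Ioc {a b : ℝ} (hab : a ≤ b) : ∫ y in Set.Ioc a b, y = (b^2 - a^2)/2 := by
  rw [← intervalIntegral.integral_of_le hab, integral_id]

lemma BF_int_yconst {a b C : ℝ} : IntegrableOn (fun y : ℝ => y * C) (Set.Ioc a b) :=
  (continuous_id.mul continuous_const).integrableOn_Ioc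

lemma BF_L1 {Pib : ℝ → ℝ}
    (hPib_nonneg : ∀ y : ℝ, 0 < y → 0 ≤ Pib y)
    (hPib_anti : ∀ x y : ℝ, 0 < x → x ≤ y → Pib y ≤ Pib x)
    (hPib_int : IntegrableOn (fun y : ℝ => min 1 y * Pib y) (Set.Ioi 0))
    {s : ℝ} (hs : 0 < s) (hs1 : s ≤ 1) :
    Pib s * (s^2/2) ≤ ∫ y in Set.Ioc (0:ℝ) s, y * Pib y := by
  have h1 : ∫ y in Set.Ioc (0:ℝ) s, y * Pib s ≤ ∫ y in Set.Ioc (0:ℝ) s, y * Pib y :=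
    setIntegral_mono_on BF_int_yconst (BF_int_yPib hPib_nonneg hPib_int hs1)
      measurableSet_Ioc
      (fun y hy => mul_le_mul_of_nonneg_left (hPib_anti y s hy.1 hy.2) hy.1.le)
  have h2 : ∫ y in Set.Ioc (0:ℝ) s, y * Pib s = Pib s * (s^2/2) := by
    rw [integral_mul_const, BF_int_id_Ioc hs.le]
    ring
  linarith

lemma BF_L2 {Pib : ℝ → ℝ}
    (hPib_nonneg : ∀ y : ℝ, 0 < y → 0 ≤ Pib y)
    (hPib_anti : ∀ x y : ℝ, 0 < x → x ≤ y → Pib y ≤ Pib x)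
    (hPib_int : IntegrableOn (fun y : ℝ => min 1 y * Pib y) (Set.Ioi 0))
    {u v : ℝ} (hu : 1 ≤ u) (huv : u ≤ v) :
    u^2 * ∫ y in Set.Ioc (0:ℝ) u⁻¹, y * Pib y ≤ v^2 * ∫ y in Set.Ioc (0:ℝ) v⁻¹, y * Pib y := by
  have hu0 : (0:ℝ) < u := lt_of_lt_of_le one_pos hu
  have hv0 : (0:ℝ) < v := lt_of_lt_of_le hu0 huv
  have hinv : v⁻¹ ≤ u⁻¹ := inv_anti₀ hu0 huv
  have hu1 : u⁻¹ ≤ 1 := by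
    rw [inv_le_one_iff₀]; right; exact hu
  have hv1 : v⁻¹ ≤ 1 := le_trans hinv hu1
  have hvinv0 : (0:ℝ) < v⁻¹ := by positivity
  have hPnn : 0 ≤ Pib v⁻¹ := hPib_nonneg _ hvinv0
  have hsplit : ∫ y in Set.Ioc (0:ℝ) u⁻¹, y * Pib y =
      (∫ y in Set.Ioc (0:ℝ) v⁻¹, y * Pib y) + ∫ y in Set.Ioc v⁻¹ u⁻¹, y * Pib y := by
    rw [← Set.Ioc_union_Ioc_eq_Ioc hvinv0.le hinv,
      setIntegral_union (Set.Ioc_disjoint_Ioc.2 (le_trans (min_le_left _ _) (le_max_right _ _)))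
        measurableSet_Ioc
        ((BF_int_yPib hPib_nonneg hPib_int hu1).mono_set
          (Set.Ioc_subset_Ioc le_rfl hinv))
        ((BF_int_yPib hPib_nonneg hPib_int hu1).mono_set
          (Set.Ioc_subset_Ioc hvinv0.le le_rfl))]
  have hW : ∫ y in Set.Ioc v⁻¹ u⁻¹, y * Pib y ≤ Pib v⁻¹ * ((1/u^2 - 1/v^2)/2) := by
    have h1 : ∫ y in Set.Ioc v⁻¹ u⁻¹, y * Pib y ≤ ∫ y in Set.Ioc v⁻¹ u⁻¹, y * Pib v⁻¹ := by
      refine setIntegral_mono_on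
        ((BF_int_yPib hPib_nonneg hPib_int hu1).mono_set
          (Set.Ioc_subset_Ioc hvinv0.le le_rfl))
        BF_int_yconst measurableSet_Ioc fun y hy => ?_
      have hy0 : (0:ℝ) < y := lt_trans hvinv0 hy.1
      exact mul_le_mul_of_nonneg_left (hPib_anti v⁻¹ y hvinv0 hy.1.le) hy0.le
    have h2 : ∫ y in Set.Ioc v⁻¹ u⁻¹, y * Pib v⁻¹ = Pib v⁻¹ * ((1/u^2 - 1/v^2)/2) := by
      rw [integral_mul_const, BF_int_id_Ioc hinv]
      field_simp
    linarith
  have hA : Pib v⁻¹ * (1/v^2/2) ≤ ∫ y in Set.Ioc (0:ℝ) v⁻¹, y * Pib y := by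
    have := BF_L1 hPib_nonneg hPib_anti hPib_int hvinv0 hv1
    have hvi : (v⁻¹)^2 = 1/v^2 := by field_simp
    rw [hvi] at this
    linarith
  set Av := ∫ y in Set.Ioc (0:ℝ) v⁻¹, y * Pib y with hAv
  set W := ∫ y in Set.Ioc v⁻¹ u⁻¹, y * Pib y with hWdef
  rw [hsplit]
  have key1 : u^2 * W ≤ Pib v⁻¹ * (1 - u^2/v^2)/2 := by
    have h4 := mul_le_mul_of_nonneg_left hW (by positivity : (0:ℝ) ≤ u^2)
    calc u^2 * W ≤ u^2 * (Pib v⁻¹ * ((1/u^2 - 1/v^2)/2)) := h4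
      _ = Pib v⁻¹ * (1 - u^2/v^2)/2 := by field_simp
  have key2 : Pib v⁻¹ * (1 - u^2/v^2)/2 ≤ (v^2 - u^2) * Av := by
    have huv2 : u^2 ≤ v^2 := by nlinarith
    have h3 : (v^2 - u^2) * (Pib v⁻¹ * (1/v^2/2)) ≤ (v^2 - u^2) * Av :=
      mul_le_mul_of_nonneg_left hA (by linarith)
    calc Pib v⁻¹ * (1 - u^2/v^2)/2 = (v^2 - u^2) * (Pib v⁻¹ * (1/v^2/2)) := by
          field_simp
      _ ≤ (v^2 - u^2) * Av := h3
  linarith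

lemma BF_L3 {Pib : ℝ → ℝ}
    (hPib_nonneg : ∀ y : ℝ, 0 < y → 0 ≤ Pib y)
    (hPib_anti : ∀ x y : ℝ, 0 < x → x ≤ y → Pib y ≤ Pib x)
    (hPib_int : IntegrableOn (fun y : ℝ => min 1 y * Pib y) (Set.Ioi 0))
    {u y : ℝ} (hu : 1 ≤ u) (hy1 : u⁻¹ ≤ y) (hy2 : y ≤ 1) :
    Pib y ≤ 2 * (u^2 * ∫ z in Set.Ioc (0:ℝ) u⁻¹, z * Pib z) := by
  have hu0 : (0:ℝ) < u := lt_of_lt_of_le one_pos hu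
  have hy0 : (0:ℝ) < y := lt_of_lt_of_le (by positivity) hy1
  set w := y⁻¹ with hw
  have hw1 : 1 ≤ w := (one_le_inv_iff₀).2 ⟨hy0, hy2⟩
  have hwu : w ≤ u := by
    rw [hw]
    calc y⁻¹ ≤ (u⁻¹)⁻¹ := inv_anti₀ (by positivity) hy1
      _ = u := inv_inv u
  have hwy : w⁻¹ = y := by rw [hw, inv_inv]
  have h1 : Pib y * (y^2/2) ≤ ∫ z in Set.Ioc (0:ℝ) y, z * Pib z :=
    BF_L1 hPib_nonneg hPib_anti hPib_int hy0 hy2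
  have h2 : w^2 * ∫ z in Set.Ioc (0:ℝ) w⁻¹, z * Pib z ≤
      u^2 * ∫ z in Set.Ioc (0:ℝ) u⁻¹, z * Pib z :=
    BF_L2 hPib_nonneg hPib_anti hPib_int hw1 hwu
  rw [hwy] at h2
  have hwy2 : w^2 * (Pib y * (y^2/2)) = Pib y / 2 := by
    rw [hw]
    field_simp
  nlinarith [mul_le_mul_of_nonneg_left h1 (by positivity : (0:ℝ) ≤ w^2)]

lemma BF_L6 {Pib : ℝ → ℝ}
    (hPib_nonneg : ∀ y : ℝ, 0 < y → 0 ≤ Pib y)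
    (hPib_int : IntegrableOn (fun y : ℝ => min 1 y * Pib y) (Set.Ioi 0))
    {u : ℝ} (hu : 1 ≤ u) :
    Real.exp (-1) * ∫ y in Set.Ioc (0:ℝ) u⁻¹, y * Pib y ≤
      ∫ y in Set.Ioi (0:ℝ), y * Real.exp (-(u*y)) * Pib y := by
  have hu0 : (0:ℝ) < u := lt_of_lt_of_le one_pos hu
  have hu1 : u⁻¹ ≤ 1 := by rw [inv_le_one_iff₀]; right; exact hu
  have I1 := BF_int1 hPib_nonneg hPib_int hu0
  have h1 : ∫ y in Set.Ioc (0:ℝ) u⁻¹, Real.exp (-1) * (y * Pib y) ≤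
      ∫ y in Set.Ioc (0:ℝ) u⁻¹, y * Real.exp (-(u*y)) * Pib y := by
    refine setIntegral_mono_on
      ((BF_int_yPib hPib_nonneg hPib_int hu1).const_mul _)
      (I1.mono_set Set.Ioc_subset_Ioi_self) measurableSet_Ioc fun y hy => ?_
    have hy0 : (0:ℝ) < y := hy.1
    have he : Real.exp (-1) ≤ Real.exp (-(u*y)) := by
      apply Real.exp_le_exp.2
      have : u * y ≤ u * u⁻¹ := mul_le_mul_of_nonneg_left hy.2 hu0.le
      rw [mul_inv_cancel₀ hu0.ne'] at this
      linarith
    calc Real.exp (-1) * (y * Pib y) ≤ Real.exp (-(u*y)) * (y * Pib y) :=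
          mul_le_mul_of_nonneg_right he (mul_nonneg hy0.le (hPib_nonneg y hy0))
      _ = y * Real.exp (-(u*y)) * Pib y := by ring
  have h2 : ∫ y in Set.Ioc (0:ℝ) u⁻¹, y * Real.exp (-(u*y)) * Pib y ≤
      ∫ y in Set.Ioi (0:ℝ), y * Real.exp (-(u*y)) * Pib y := by
    refine setIntegral_mono_set I1 ?_
      (HasSubset.Subset.eventuallyLE Set.Ioc_subset_Ioi_self)
    filter_upwards [ae_restrict_mem measurableSet_Ioi] with y (hy : (0:ℝ) < y)
    have := hPib_nonneg y hy
    positivity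
  have h3 : ∫ y in Set.Ioc (0:ℝ) u⁻¹, Real.exp (-1) * (y * Pib y) =
      Real.exp (-1) * ∫ y in Set.Ioc (0:ℝ) u⁻¹, y * Pib y := integral_const_mul _ _
  linarith

lemma BF_L4 {Pib : ℝ → ℝ}
    (hPib_nonneg : ∀ y : ℝ, 0 < y → 0 ≤ Pib y)
    (hPib_anti : ∀ x y : ℝ, 0 < x → x ≤ y → Pib y ≤ Pib x)
    (hPib_int : IntegrableOn (fun y : ℝ => min 1 y * Pib y) (Set.Ioi 0))
    {u : ℝ} (hu : 1 ≤ u) :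
    ∫ y in Set.Ioi (0:ℝ), (1 - Real.exp (-(u*y))) * Pib y ≤
      u * (∫ y in Set.Ioc (0:ℝ) u⁻¹, y * Pib y) + (∫ y in Set.Ioc u⁻¹ 1, Pib y) +
        ∫ y in Set.Ioi (1:ℝ), Pib y := by
  have hu0 : (0:ℝ) < u := lt_of_lt_of_le one_pos hu
  have hui0 : (0:ℝ) < u⁻¹ := by positivity
  have hu1 : u⁻¹ ≤ 1 := by rw [inv_le_one_iff₀]; right; exact hu
  have hint := BF_int2 hPib_nonneg hPib_int hu0.le
  have hsplit1 := BF_split one_pos hint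
  have hsplit2 : ∫ y in Set.Ioc (0:ℝ) 1, (1 - Real.exp (-(u*y))) * Pib y =
      (∫ y in Set.Ioc (0:ℝ) u⁻¹, (1 - Real.exp (-(u*y))) * Pib y) +
        ∫ y in Set.Ioc u⁻¹ 1, (1 - Real.exp (-(u*y))) * Pib y := by
    rw [← Set.Ioc_union_Ioc_eq_Ioc hui0.le hu1,
      setIntegral_union (Set.Ioc_disjoint_Ioc.2 (le_trans (min_le_left _ _) (le_max_right _ _)))
        measurableSet_Ioc
        ((hint.mono_set (Set.Ioc_subset_Ioi_self.trans (Set.Ioi_subset_Ioi le_rfl))))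
        ((hint.mono_set (fun y hy => lt_trans hui0 hy.1)))]
  have p1 : ∫ y in Set.Ioc (0:ℝ) u⁻¹, (1 - Real.exp (-(u*y))) * Pib y ≤
      u * ∫ y in Set.Ioc (0:ℝ) u⁻¹, y * Pib y := by
    have step : ∫ y in Set.Ioc (0:ℝ) u⁻¹, (1 - Real.exp (-(u*y))) * Pib y ≤
        ∫ y in Set.Ioc (0:ℝ) u⁻¹, u * (y * Pib y) := by
      refine setIntegral_mono_on (hint.mono_set Set.Ioc_subset_Ioi_self)
        ((BF_int_yPib hPib_nonneg hPib_int hu1).const_mul _) measurableSet_Ioc fun y hy => ?_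
      have hy0 : (0:ℝ) < y := hy.1
      have he2 : 1 - (u*y) ≤ Real.exp (-(u*y)) := by
        have := Real.add_one_le_exp (-(u*y)); linarith
      calc (1 - Real.exp (-(u*y))) * Pib y ≤ (u*y) * Pib y :=
            mul_le_mul_of_nonneg_right (by linarith) (hPib_nonneg y hy0)
        _ = u * (y * Pib y) := by ring
    rw [integral_const_mul] at step
    exact step
  have p2 : ∫ y in Set.Ioc u⁻¹ 1, (1 - Real.exp (-(u*y))) * Pib y ≤
      ∫ y in Set.Ioc u⁻¹ 1, Pib y := by
    refine setIntegral_mono_on (hint.mono_set (fun y hy => lt_trans hui0 hy.1))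
      (BF_int_Ioc hPib_anti hPib_nonneg hPib_int hui0) measurableSet_Ioc fun y hy => ?_
    have hy0 : (0:ℝ) < y := lt_trans hui0 hy.1
    have := hPib_nonneg y hy0
    nlinarith [Real.exp_nonneg (-(u*y))]
  have p3 : ∫ y in Set.Ioi (1:ℝ), (1 - Real.exp (-(u*y))) * Pib y ≤
      ∫ y in Set.Ioi (1:ℝ), Pib y := by
    refine setIntegral_mono_on (hint.mono_set (Set.Ioi_subset_Ioi zero_le_one))
      (BF_int_tail hPib_nonneg hPib_int le_rfl) measurableSet_Ioi fun y hy => ?_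
    have hy0 : (0:ℝ) < y := lt_trans one_pos hy
    have := hPib_nonneg y hy0
    nlinarith [Real.exp_nonneg (-(u*y))]
  linarith

lemma BF_L5 {Pib : ℝ → ℝ}
    (hPib_nonneg : ∀ y : ℝ, 0 < y → 0 ≤ Pib y)
    (hPib_anti : ∀ x y : ℝ, 0 < x → x ≤ y → Pib y ≤ Pib x)
    (hPib_int : IntegrableOn (fun y : ℝ => min 1 y * Pib y) (Set.Ioi 0))
    {u v₀ : ℝ} (hv₀ : 1 ≤ v₀) (huv : v₀ ≤ u) :
    ∫ y in Set.Ioc u⁻¹ 1, Pib y ≤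
      (2 * (u^2 * ∫ z in Set.Ioc (0:ℝ) u⁻¹, z * Pib z)) * v₀⁻¹ +
        ∫ y in Set.Ioc v₀⁻¹ 1, Pib y := by
  have hv₀0 : (0:ℝ) < v₀ := lt_of_lt_of_le one_pos hv₀
  have hu0 : (0:ℝ) < u := lt_of_lt_of_le hv₀0 huv
  have hu1 : 1 ≤ u := le_trans hv₀ huv
  have hui0 : (0:ℝ) < u⁻¹ := by positivity
  have hvi0 : (0:ℝ) < v₀⁻¹ := by positivity
  have hiv : u⁻¹ ≤ v₀⁻¹ := inv_anti₀ hv₀0 huv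
  have hv1 : v₀⁻¹ ≤ 1 := by rw [inv_le_one_iff₀]; right; exact hv₀
  set NN := u^2 * (∫ z in Set.Ioc (0:ℝ) u⁻¹, z * Pib z) with hNN
  have hNN0 : 0 ≤ NN := by
    rw [hNN]
    have : 0 ≤ ∫ z in Set.Ioc (0:ℝ) u⁻¹, z * Pib z :=
      setIntegral_nonneg measurableSet_Ioc fun z hz =>
        mul_nonneg hz.1.le (hPib_nonneg z hz.1)
    positivity
  have hsplit : ∫ y in Set.Ioc u⁻¹ 1, Pib y =
      (∫ y in Set.Ioc u⁻¹ v₀⁻¹, Pib y) + ∫ y in Set.Ioc v₀⁻¹ 1, Pib y := by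
    rw [← Set.Ioc_union_Ioc_eq_Ioc hiv hv1,
      setIntegral_union (Set.Ioc_disjoint_Ioc.2 (le_trans (min_le_left _ _) (le_max_right _ _)))
        measurableSet_Ioc
        ((BF_int_Ioc hPib_anti hPib_nonneg hPib_int hui0 (b := 1)).mono_set
          (Set.Ioc_subset_Ioc le_rfl hv1))
        ((BF_int_Ioc hPib_anti hPib_nonneg hPib_int hvi0 (b := 1)))]
  have hmid : ∫ y in Set.Ioc u⁻¹ v₀⁻¹, Pib y ≤ (2*NN) * v₀⁻¹ := by
    have step : ∫ y in Set.Ioc u⁻¹ v₀⁻¹, Pib y ≤ ∫ _ in Set.Ioc u⁻¹ v₀⁻¹, (2*NN : ℝ) := by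
      refine setIntegral_mono_on
        ((BF_int_Ioc hPib_anti hPib_nonneg hPib_int hui0 (b := 1)).mono_set
          (Set.Ioc_subset_Ioc le_rfl hv1))
        (integrableOn_const (ne_of_lt measure_Ioc_lt_top)) measurableSet_Ioc fun y hy => ?_
      exact BF_L3 hPib_nonneg hPib_anti hPib_int hu1 hy.1.le (le_trans hy.2 hv1)
    have hvol : ∫ _ in Set.Ioc u⁻¹ v₀⁻¹, (2*NN : ℝ) = (2*NN) * (v₀⁻¹ - u⁻¹) := by
      rw [setIntegral_const, measureReal_def, Real.volume_Ioc, ENNReal.toReal_ofReal (by linarith), smul_eq_mul]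
      ring
    have : (2*NN) * (v₀⁻¹ - u⁻¹) ≤ (2*NN) * v₀⁻¹ :=
      mul_le_mul_of_nonneg_left (by linarith) (by linarith)
    linarith
  linarith

/-- asymptotics of `u² φ'(u)/φ(u)` for a nondegenerate Bernstein function of
class `B_N` with data `(m, σ², Π̄)`. -/
theorem bernstein_BN_u_sq_deriv_ratio
    (φ Pib : ℝ → ℝ) (m σ2 : ℝ)
    (hm : 0 ≤ m) (hσ : 0 ≤ σ2)
    (hPib_nonneg : ∀ y : ℝ, 0 < y → 0 ≤ Pib y)
    (hPib_anti : ∀ x y : ℝ, 0 < x → x ≤ y → Pib y ≤ Pib x)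
    (hPib_int : IntegrableOn (fun y : ℝ => min 1 y * Pib y) (Set.Ioi 0))
    (hrep : ∀ u : ℝ, 0 < u →
      φ u = m + σ2 * u + ∫ y in Set.Ioi (0:ℝ), (1 - Real.exp (-(u * y))) * Pib y)
    (hnd : ¬ (m = 0 ∧ σ2 = 0 ∧ ∀ y : ℝ, 0 < y → Pib y = 0)) :
    ((0 < σ2 ∨ Filter.Tendsto Pib (nhdsWithin 0 (Set.Ioi 0)) Filter.atTop) →
      Filter.Tendsto (fun u : ℝ => u ^ 2 * deriv φ u / φ u) Filter.atTop Filter.atTop)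
    ∧ (∀ c : ℝ, σ2 = 0 → Filter.Tendsto Pib (nhdsWithin 0 (Set.Ioi 0)) (nhds c) →
      Filter.Tendsto (fun u : ℝ => u ^ 2 * deriv φ u / φ u) Filter.atTop
        (nhds (c / (m + ∫ y in Set.Ioi (0:ℝ), Pib y)))) := by
  constructor
  · intro hcase
    rw [Filter.tendsto_atTop]
    intro b
    rcases hcase with hσpos | hPinf
    · -- case σ2 > 0
      set J := ∫ y in Set.Ioi (0:ℝ), min 1 y * Pib y with hJ
      have hJ0 : 0 ≤ J := setIntegral_nonneg measurableSet_Ioi fun y hy =>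
        mul_nonneg (le_of_lt (lt_min one_pos hy)) (hPib_nonneg y hy)
      set K := m + σ2 + J with hKdef
      have hK : 0 < K := by rw [hKdef]; linarith
      filter_upwards [eventually_ge_atTop (1:ℝ), eventually_ge_atTop (K*b/σ2)]
        with u hu1 hub
      have hu0 : (0:ℝ) < u := lt_of_lt_of_le one_pos hu1
      have hφ := BF_phi_pos hm hσ hPib_nonneg hPib_anti hPib_int hrep hnd hu0
      have hd := (BF_hasDeriv hPib_nonneg hPib_int hrep hu0).deriv
      have hI0 : 0 ≤ ∫ y in Set.Ioi (0:ℝ), y * Real.exp (-(u*y)) * Pib y := by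
        refine setIntegral_nonneg measurableSet_Ioi fun y hy => ?_
        have h := hPib_nonneg y hy
        have : (0:ℝ) < y := hy
        positivity
      have hφle : φ u ≤ K * u := by
        have step : ∫ y in Set.Ioi (0:ℝ), (1 - Real.exp (-(u*y))) * Pib y ≤
            ∫ y in Set.Ioi (0:ℝ), max 1 u * (min 1 y * Pib y) := by
          refine setIntegral_mono_on (BF_int2 hPib_nonneg hPib_int hu0.le)
            (hPib_int.const_mul _) measurableSet_Ioi fun y hy => ?_
          have hy0 : (0:ℝ) < y := hy
          have hb2 := BF_bound2 hu0.le y hy0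
          calc (1 - Real.exp (-(u*y))) * Pib y ≤ |1 - Real.exp (-(u*y))| * Pib y :=
                mul_le_mul_of_nonneg_right (le_abs_self _) (hPib_nonneg y hy0)
            _ ≤ (max 1 u * min 1 y) * Pib y :=
                mul_le_mul_of_nonneg_right hb2 (hPib_nonneg y hy0)
            _ = max 1 u * (min 1 y * Pib y) := by ring
        rw [integral_const_mul, max_eq_right hu1] at step
        rw [hrep u hu0, hKdef]
        nlinarith
      rcases le_or_gt b 0 with hb | hb
      · refine le_trans hb (div_nonneg ?_ hφ.le)
        rw [hd]
        nlinarith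
      · rw [le_div_iff₀ hφ, hd]
        have hKb : K * b ≤ u * σ2 := by
          rw [div_le_iff₀ hσpos] at hub
          linarith
        have h7 : b * φ u ≤ b * (K * u) := mul_le_mul_of_nonneg_left hφle hb.le
        nlinarith
    · -- case Pib → ∞ at 0+
      set E := Real.exp 1 with hE
      have hE1 : 1 ≤ E := by
        have := Real.add_one_le_exp 1
        rw [hE]; linarith
      have hE0 : 0 < E := lt_of_lt_of_le one_pos hE1
      set M := max b 1 with hM
      have hM1 : 1 ≤ M := le_max_right _ _
      have hMb : b ≤ M := le_max_left _ _
      have hM0 : 0 < M := lt_of_lt_of_le one_pos hM1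
      set v₀ := 12 * E * M with hv₀def
      have hv₀1 : 1 ≤ v₀ := by nlinarith
      have hv₀0 : 0 < v₀ := lt_of_lt_of_le one_pos hv₀1
      set K := ∫ y in Set.Ioc v₀⁻¹ 1, Pib y with hKdef
      have hK0 : 0 ≤ K := setIntegral_nonneg measurableSet_Ioc fun y hy =>
        hPib_nonneg y (lt_trans (by positivity) hy.1)
      set Jt := ∫ y in Set.Ioi (1:ℝ), Pib y with hJt
      have hJt0 : 0 ≤ Jt := setIntegral_nonneg measurableSet_Ioi fun y hy =>
        hPib_nonneg y (lt_trans one_pos hy)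
      set C₀ := m + K + Jt with hC₀def
      have hC₀ : 0 ≤ C₀ := by rw [hC₀def]; linarith
      have hNinf : Filter.Tendsto (fun u : ℝ => Pib u⁻¹) atTop atTop :=
        hPinf.comp tendsto_inv_atTop_nhdsGT_zero
      filter_upwards [eventually_ge_atTop (1:ℝ), eventually_ge_atTop v₀,
        eventually_ge_atTop M, hNinf.eventually_ge_atTop (24*E*M*C₀)]
        with u hu1 huv₀ huM hPbig
      have hu0 : (0:ℝ) < u := lt_of_lt_of_le one_pos hu1
      have hφ := BF_phi_pos hm hσ hPib_nonneg hPib_anti hPib_int hrep hnd hu0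
      have hd := (BF_hasDeriv hPib_nonneg hPib_int hrep hu0).deriv
      set A := (∫ z in Set.Ioc (0:ℝ) u⁻¹, z * Pib z) with hA
      have hA0 : 0 ≤ A := setIntegral_nonneg measurableSet_Ioc fun z hz =>
        mul_nonneg hz.1.le (hPib_nonneg z hz.1)
      have hui0 : (0:ℝ) < u⁻¹ := by positivity
      have hui1 : u⁻¹ ≤ 1 := by rw [inv_le_one_iff₀]; right; exact hu1
      have hNNbig : 12*E*M*C₀ ≤ u^2 * A := by
        have h1 := BF_L1 hPib_nonneg hPib_anti hPib_int hui0 hui1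
        have h2 : u^2 * (Pib u⁻¹ * ((u⁻¹)^2/2)) = Pib u⁻¹ / 2 := by
          field_simp
        nlinarith [mul_le_mul_of_nonneg_left h1 (by positivity : (0:ℝ) ≤ u^2)]
      set N := (∫ y in Set.Ioi (0:ℝ), y * Real.exp (-(u*y)) * Pib y) with hND
      have hN0 : 0 ≤ N := by
        refine setIntegral_nonneg measurableSet_Ioi fun y hy => ?_
        have h := hPib_nonneg y hy
        have : (0:ℝ) < y := hy
        positivity
      have hNl : E⁻¹ * A ≤ N := by
        have h6 := BF_L6 hPib_nonneg hPib_int hu1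
        rwa [Real.exp_neg, ← hE] at h6
      have hφle : φ u ≤ σ2*u + C₀ + u*A + (2*(u^2*A))*v₀⁻¹ := by
        rw [hrep u hu0]
        have h4 := BF_L4 hPib_nonneg hPib_anti hPib_int hu1
        have h5 := BF_L5 hPib_nonneg hPib_anti hPib_int hv₀1 huv₀
        rw [← hA] at h4 h5
        rw [← hKdef] at h5
        rw [← hJt] at h4
        rw [hC₀def]
        linarith
      clear_value E M v₀ K Jt C₀ A N
      rcases le_or_gt b 0 with hb | hb
      · refine le_trans hb (div_nonneg ?_ hφ.le)
        rw [hd]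
        have hσN : 0 ≤ σ2 + N := by linarith
        positivity
      · rw [le_div_iff₀ hφ, hd]
        have hEinv : E * E⁻¹ = 1 := mul_inv_cancel₀ hE0.ne'
        have hEinv0 : 0 ≤ E⁻¹ := by positivity
        have t1 : M*(σ2*u) ≤ σ2*u^2 := by
          calc M*(σ2*u) = (σ2*u)*M := by ring
            _ ≤ (σ2*u)*u := mul_le_mul_of_nonneg_left huM (by positivity)
            _ = σ2*u^2 := by ring
        have t2 : M*C₀ ≤ E⁻¹*(u^2*A)/3 := by
          have h8 := mul_le_mul_of_nonneg_left hNNbig hEinv0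
          have h8' : E⁻¹ * (12*E*M*C₀) = 12*(M*C₀) := by
            calc E⁻¹ * (12*E*M*C₀) = (E*E⁻¹) * (12*(M*C₀)) := by ring
              _ = 12*(M*C₀) := by rw [hEinv]; ring
          rw [h8'] at h8
          have hMC0 : 0 ≤ M*C₀ := mul_nonneg hM0.le hC₀
          linarith
        have t3 : M*(u*A) ≤ E⁻¹*(u^2*A)/3 := by
          have h7 : 12*E*M ≤ u := by rw [hv₀def] at huv₀; exact huv₀
          have h6 := mul_le_mul_of_nonneg_left h7 hEinv0
          have h6' : E⁻¹ * (12*E*M) = 12*M := by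
            calc E⁻¹ * (12*E*M) = (E*E⁻¹) * (12*M) := by ring
              _ = 12*M := by rw [hEinv]; ring
          rw [h6'] at h6
          have huA : 0 ≤ u*A := mul_nonneg hu0.le hA0
          have hEu0 : 0 ≤ E⁻¹*u := mul_nonneg hEinv0 hu0.le
          have hM3 : M ≤ E⁻¹*u/3 := by linarith
          calc M*(u*A) ≤ (E⁻¹*u/3)*(u*A) := mul_le_mul_of_nonneg_right hM3 huA
            _ = E⁻¹*(u^2*A)/3 := by ring
        have t4 : M*((2*(u^2*A))*v₀⁻¹) ≤ E⁻¹*(u^2*A)/3 := by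
          have hvv : v₀⁻¹ = E⁻¹ * M⁻¹ / 12 := by
            rw [hv₀def, mul_inv, mul_inv]
            ring
          have hMM : M * M⁻¹ = 1 := mul_inv_cancel₀ hM0.ne'
          rw [hvv]
          have hA2 : 0 ≤ u^2*A := by positivity
          calc M*((2*(u^2*A))*(E⁻¹ * M⁻¹ / 12)) = (M * M⁻¹) * (E⁻¹*(u^2*A)/6) := by ring
            _ = E⁻¹*(u^2*A)/6 := by rw [hMM]; ring
            _ ≤ E⁻¹*(u^2*A)/3 := by
                have hEA : 0 ≤ E⁻¹*(u^2*A) := mul_nonneg hEinv0 hA2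
                linarith
        have hMφ : M * φ u ≤ σ2*u^2 + E⁻¹*(u^2*A) := by
          have h9 : M * φ u ≤ M*(σ2*u) + M*C₀ + M*(u*A) + M*((2*(u^2*A))*v₀⁻¹) := by
            calc M * φ u ≤ M*(σ2*u + C₀ + u*A + (2*(u^2*A))*v₀⁻¹) :=
                  mul_le_mul_of_nonneg_left hφle hM0.le
              _ = M*(σ2*u) + M*C₀ + M*(u*A) + M*((2*(u^2*A))*v₀⁻¹) := by ring
          linarith
        have h7 : b * φ u ≤ M * φ u := mul_le_mul_of_nonneg_right hMb hφ.le
        have h9 : u^2*(E⁻¹*A) ≤ u^2 * N := mul_le_mul_of_nonneg_left hNl (by positivity)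
        have h10 : E⁻¹*(u^2*A) = u^2*(E⁻¹*A) := by ring
        have h11 : u^2*(σ2 + N) = σ2*u^2 + u^2*N := by ring
        linarith
  · -- part (ii)
    intro c hσ2 hten
    have hnum := BF_num_ii hPib_nonneg hPib_anti hPib_int hten
    have hden := BF_den_ii hPib_nonneg hPib_anti hPib_int hrep hσ2 hten
    have hIp : 0 ≤ ∫ y in Set.Ioi (0:ℝ), Pib y :=
      setIntegral_nonneg measurableSet_Ioi fun y hy => hPib_nonneg y hy
    have hL0 : 0 < m + ∫ y in Set.Ioi (0:ℝ), Pib y := by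
      rcases lt_or_eq_of_le hm with hm' | hm'
      · linarith
      · push_neg at hnd
        obtain ⟨y₀, hy₀, hPy₀⟩ := hnd hm'.symm hσ2
        have hPy₀' : 0 < Pib y₀ := lt_of_le_of_ne (hPib_nonneg y₀ hy₀) (Ne.symm hPy₀)
        have hint := BF_Pib_integrable hPib_nonneg hPib_anti hPib_int hten
        have hlow : Pib y₀ * (volume (Set.Ioc (y₀/2) y₀)).toReal ≤
            ∫ y in Set.Ioc (y₀/2) y₀, Pib y := by
          refine setIntegral_ge_of_const_le_real measurableSet_Ioc (ne_of_lt measure_Ioc_lt_top)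
            (fun y hy => hPib_anti y y₀ (lt_trans (by linarith) hy.1) hy.2)
            (hint.mono_set (fun y hy => lt_trans (by linarith) hy.1))
        have hmono : ∫ y in Set.Ioc (y₀/2) y₀, Pib y ≤ ∫ y in Set.Ioi (0:ℝ), Pib y := by
          refine setIntegral_mono_set hint ?_
            (HasSubset.Subset.eventuallyLE (fun y hy => lt_trans (by linarith) hy.1))
          filter_upwards [ae_restrict_mem measurableSet_Ioi] with y hy
          exact hPib_nonneg y hy
        have hvol : (volume (Set.Ioc (y₀/2) y₀)).toReal = y₀/2 := by
          rw [Real.volume_Ioc, ENNReal.toReal_ofReal (by linarith)]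
          ring
        rw [hvol] at hlow
        have hpos : 0 < Pib y₀ * (y₀/2) := mul_pos hPy₀' (half_pos hy₀)
        linarith
    have hfl := hnum.div hden hL0.ne'
    refine hfl.congr' ?_
    filter_upwards [eventually_gt_atTop (0:ℝ)] with u hu0
    rw [(BF_hasDeriv hPib_nonneg hPib_int hrep hu0).deriv, hσ2, zero_add]
    rfl
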